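/- arXiv:1212.3665 — 3 statements merged into one kernel-verified Lean document; each statement's English description precedes it below -/
import Mathlib

section
/- Let W be a nonzero finite-dimensional complex inner product space, A a self-adjoint linear endomorphism of W, and w ∈ W a nonzero vector. Then the function t ↦ log ‖exp(tA) w‖² is convex on ℝ. -/
open scoped ComplexInnerProductSpace

theorem stmt_0
    (W : Type*) [NormedAddCommGroup W] [InnerProductSpace ℂ W]
    [FiniteDimensional ℂ W] [Nontrivial W]
    (A : W →L[ℂ] W)
    (hA : ∀ x y : W, ⟪A x, y⟫ = ⟪x, A y⟫)
    (w : W) (hw : w ≠ 0) :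
    ConvexOn ℝ Set.univ
      (fun t : ℝ => Real.log (‖(NormedSpace.exp (t • A)) w‖ ^ 2)) := by
  have hexp : (NormedSpace.exp : (W →L[ℂ] W) → (W →L[ℂ] W)) = NormedSpace.exp :=
    rfl
  -- the evolving vector
  set v : ℝ → W := fun t => NormedSpace.exp (t • A) w with hvdef
  have hvne : ∀ t, v t ≠ 0 := by
    intro t hvt
    apply hw
    have h1 : NormedSpace.exp (-(t • A)) * NormedSpace.exp (t • A) = 1 := by
      letI : NormedAlgebra ℚ (W →L[ℂ] W) := NormedAlgebra.restrictScalars ℚ ℂ _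
      rw [← NormedSpace.exp_add_of_commute ((Commute.refl (t • A)).neg_left),
        neg_add_cancel, NormedSpace.exp_zero]
    have h2 : (NormedSpace.exp (-(t • A)) * NormedSpace.exp (t • A)) w = w := by
      rw [h1]; rfl
    rw [← h2, ContinuousLinearMap.mul_apply]
    show NormedSpace.exp (-(t • A)) (v t) = 0
    rw [hvt, map_zero]
  -- evaluation at w as a continuous ℝ-linear map
  let φ : (W →L[ℂ] W) →L[ℝ] W :=
    LinearMap.mkContinuous
      { toFun := fun B => B w
        map_add' := fun B C => rfl
        map_smul' := fun c B => rfl } ‖w‖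
      (fun B => by rw [mul_comm]; exact B.le_opNorm w)
  have hv' : ∀ t, HasDerivAt v (A (v t)) t := by
    intro t
    have hB := hasDerivAt_exp_smul_const' (𝕂 := ℝ) A t
    have := φ.hasFDerivAt.comp_hasDerivAt t hB
    exact this
  have hAv : ∀ t, HasDerivAt (fun s => A (v s)) (A (A (v t))) t := by
    intro t
    exact ((A.restrictScalars ℝ).hasFDerivAt.comp_hasDerivAt t (hv' t))
  -- auxiliary real functions
  set g : ℝ → ℝ := fun t => ‖v t‖ ^ 2 with hgdef
  set u : ℝ → ℝ := fun t => 2 * RCLike.re (⟪A (v t), v t⟫ : ℂ) with hudef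
  have hgpos : ∀ t, 0 < g t := fun t => pow_pos (norm_pos_iff.mpr (hvne t)) 2
  have hg : ∀ t, HasDerivAt g (u t) t := by
    intro t
    have h1 := (hv' t).inner ℂ (hv' t)
    have h2 := (RCLike.reCLM (K := ℂ)).hasFDerivAt.comp_hasDerivAt t h1
    have h3 : g = fun s => RCLike.re (⟪v s, v s⟫ : ℂ) :=
      funext fun s => (inner_self_eq_norm_sq (𝕜 := ℂ) (v s)).symm
    rw [h3]
    refine h2.congr_deriv ?_; symm
    simp only [hudef, ContinuousLinearMap.coe_coe, RCLike.reCLM_apply, map_add, two_mul]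
    rw [inner_re_symm]
  have hu : ∀ t, HasDerivAt u (4 * ‖A (v t)‖ ^ 2) t := by
    intro t
    have h1 := (hAv t).inner ℂ (hv' t)
    have h2 := (RCLike.reCLM (K := ℂ)).hasFDerivAt.comp_hasDerivAt t h1
    have h3 := h2.const_mul (2 : ℝ)
    refine h3.congr_deriv ?_; symm
    have e1 : (⟪A (A (v t)), v t⟫ : ℂ) = ⟪A (v t), A (v t)⟫ := hA (A (v t)) (v t)
    simp only [ContinuousLinearMap.coe_coe, RCLike.reCLM_apply, map_add, e1,
      inner_self_eq_norm_sq (𝕜 := ℂ)]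
    ring
  set f' : ℝ → ℝ := fun t => u t / g t with hf'def
  set f'' : ℝ → ℝ := fun t => (4 * ‖A (v t)‖ ^ 2 * g t - u t * u t) / g t ^ 2 with hf''def
  have hf : ∀ t, HasDerivAt (fun s => Real.log (g s)) (f' t) t := by
    intro t
    have := (Real.hasDerivAt_log (ne_of_gt (hgpos t))).comp t (hg t)
    exact this.congr_deriv (by simp [hf'def, div_eq_inv_mul])
  have hf' : ∀ t, HasDerivAt f' (f'' t) t := by
    intro t
    exact (hu t).div (hg t) (ne_of_gt (hgpos t))
  have hnn : ∀ t, 0 ≤ f'' t := by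
    intro t
    apply div_nonneg _ (sq_nonneg _)
    have habs : |u t| ≤ 2 * (‖A (v t)‖ * ‖v t‖) := by
      rw [hudef]
      calc |2 * RCLike.re (⟪A (v t), v t⟫ : ℂ)|
          = 2 * |RCLike.re (⟪A (v t), v t⟫ : ℂ)| := by
            rw [abs_mul]; norm_num
        _ ≤ 2 * ‖(⟪A (v t), v t⟫ : ℂ)‖ := by
            have := RCLike.abs_re_le_norm (⟪A (v t), v t⟫ : ℂ)
            linarith
        _ ≤ 2 * (‖A (v t)‖ * ‖v t‖) := by
            have := norm_inner_le_norm (𝕜 := ℂ) (A (v t)) (v t)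
            linarith
    have h1 : u t * u t ≤ (2 * (‖A (v t)‖ * ‖v t‖)) * (2 * (‖A (v t)‖ * ‖v t‖)) := by
      calc u t * u t = |u t| * |u t| := (abs_mul_abs_self _).symm
        _ ≤ _ := mul_self_le_mul_self (abs_nonneg _) habs
    have h2 : g t = ‖v t‖ ^ 2 := rfl
    nlinarith [sq_nonneg (‖A (v t)‖ * ‖v t‖)]
  have hgoal : (fun t : ℝ => Real.log (‖(NormedSpace.exp (t • A)) w‖ ^ 2)) =
      fun s => Real.log (g s) := by
    funext s
    rw [hexp]
  rw [hgoal]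
  exact convexOn_of_hasDerivWithinAt2_nonneg convex_univ
    (fun t _ => (hf t).continuousAt.continuousWithinAt)
    (fun t _ => ((hf t).hasDerivWithinAt))
    (fun t _ => ((hf' t).hasDerivWithinAt))
    (fun t _ => hnn t)
end

section
/- Let W be a nonzero finite-dimensional complex inner product space, A a self-adjoint linear endomorphism of W, and w ∈ W a nonzero vector. Then the function f(t) = log ‖exp(tA) w‖² is affine on ℝ (i.e. there exist real α, β with f(t) = αt + β for all t) if and only if w is an eigenvector of A. -/
open scoped ComplexInnerProductSpace

lemma exp_apply_eig {W : Type*} [NormedAddCommGroup W] [InnerProductSpace ℂ W]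
    [CompleteSpace W] (B : W →L[ℂ] W) (w : W) (μ : ℂ) (h : B w = μ • w) :
    NormedSpace.exp B w = Complex.exp μ • w := by
  have hpow : ∀ n : ℕ, (B ^ n) w = μ ^ n • w := by
    intro n
    induction n with
    | zero => simp
    | succ n ih =>
      rw [pow_succ, pow_succ, ContinuousLinearMap.mul_apply, h, map_smul, ih, smul_smul,
        mul_comm]
  have hs : Summable fun n : ℕ => (n.factorial⁻¹ : ℂ) • B ^ n :=
    NormedSpace.expSeries_summable' B
  have h1 : NormedSpace.exp B w = ∑' n : ℕ, ((n.factorial⁻¹ : ℂ) • B ^ n) w := by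
    rw [NormedSpace.exp_eq_tsum (𝕂 := ℂ)]
    exact ((ContinuousLinearMap.apply ℂ W w).map_tsum hs)
  have h2 : ∀ n : ℕ, ((n.factorial⁻¹ : ℂ) • B ^ n) w = ((n.factorial⁻¹ : ℂ) * μ ^ n) • w := by
    intro n
    rw [ContinuousLinearMap.smul_apply, hpow n, smul_smul]
  rw [h1]
  simp_rw [h2]
  rw [Summable.tsum_smul_const]
  · congr 1
    rw [Complex.exp_eq_exp_ℂ, NormedSpace.exp_eq_tsum (𝕂 := ℂ)]
    simp [smul_eq_mul]
  · simpa [smul_eq_mul] using NormedSpace.expSeries_summable' (𝕂 := ℂ) μ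

lemma slope_zero {d C : ℝ} (h : ∀ t : ℝ, d * t ≤ C) : d = 0 := by
  by_contra hd
  have h1 := h ((C + 1) / d)
  rw [mul_div_cancel₀ _ hd] at h1
  linarith

lemma tA_apply_eig {W : Type*} [NormedAddCommGroup W] [InnerProductSpace ℂ W]
    (A : W →L[ℂ] W) (v : W) (lam : ℝ) (h : A v = (lam : ℂ) • v) (t : ℝ) :
    (t • A) v = ((t * lam : ℝ) : ℂ) • v := by
  rw [ContinuousLinearMap.smul_apply, h, RCLike.real_smul_eq_coe_smul (K := ℂ), smul_smul,
    Complex.ofReal_mul]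
  exact rfl

theorem stmt_1
    (W : Type*) [NormedAddCommGroup W] [InnerProductSpace ℂ W]
    [FiniteDimensional ℂ W] [Nontrivial W]
    (A : W →L[ℂ] W)
    (hA : ∀ x y : W, ⟪A x, y⟫ = ⟪x, A y⟫)
    (w : W) (hw : w ≠ 0) :
    (∃ α β : ℝ, ∀ t : ℝ,
        Real.log (‖(NormedSpace.exp (t • A)) w‖ ^ 2) = α * t + β) ↔
      ∃ μ : ℂ, A w = μ • w := by
  constructor
  · rintro ⟨α, β, hf⟩
    -- spectral decomposition
    have hT : LinearMap.IsSymmetric (A : W →ₗ[ℂ] W) := fun x y => hA x y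
    set n := Module.finrank ℂ W with hn'
    have hn : Module.finrank ℂ W = n := rfl
    set b := hT.eigenvectorBasis hn with hb
    set lam := hT.eigenvalues hn with hlam
    have heig : ∀ i, A (b i) = (lam i : ℂ) • b i := fun i => hT.apply_eigenvectorBasis hn i
    set c : Fin n → ℂ := fun i => ⟪b i, w⟫ with hc
    have hwsum : ∑ i, c i • b i = w := b.sum_repr' w
    -- exp formula
    have hexp : ∀ t : ℝ, NormedSpace.exp (t • A) w
        = ∑ i, (c i * Complex.exp ((t * lam i : ℝ) : ℂ)) • b i := by
      intro t
      conv_lhs => rw [← hwsum]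
      rw [map_sum]
      refine Finset.sum_congr rfl fun i _ => ?_
      rw [map_smul, exp_apply_eig (t • A) (b i) _ (tA_apply_eig A (b i) (lam i) (heig i) t),
        smul_smul, mul_comm]
    -- norm formula
    have hnorm : ∀ t : ℝ, ‖NormedSpace.exp (t • A) w‖ ^ 2
        = ∑ i, ‖c i‖ ^ 2 * Real.exp (2 * lam i * t) := by
      intro t
      rw [hexp t]
      have h1 : (⟪∑ i, (fun i => c i * Complex.exp ((t * lam i : ℝ) : ℂ)) i • b i,
          ∑ i, (fun i => c i * Complex.exp ((t * lam i : ℝ) : ℂ)) i • b i⟫ : ℂ)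
          = ∑ i, (starRingEnd ℂ) (c i * Complex.exp ((t * lam i : ℝ) : ℂ))
              * (c i * Complex.exp ((t * lam i : ℝ) : ℂ)) :=
        b.orthonormal.inner_sum _ _ Finset.univ
      rw [inner_self_eq_norm_sq_to_K (𝕜 := ℂ)] at h1
      have h2 : ‖∑ i, (fun i => c i * Complex.exp ((t * lam i : ℝ) : ℂ)) i • b i‖ ^ 2
          = (∑ i, (starRingEnd ℂ) (c i * Complex.exp ((t * lam i : ℝ) : ℂ))
              * (c i * Complex.exp ((t * lam i : ℝ) : ℂ))).re := by
        rw [← h1]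
        norm_cast
      rw [h2, Complex.re_sum]
      refine Finset.sum_congr rfl fun i _ => ?_
      rw [mul_comm, Complex.mul_conj, Complex.ofReal_re, Complex.normSq_eq_norm_sq,
        norm_mul, mul_pow,
        Complex.norm_exp, Complex.ofReal_re, sq (Real.exp _), ← Real.exp_add]
      have h3 : t * lam i + t * lam i = 2 * lam i * t := by ring
      rw [h3]
    -- positivity of the sum
    have hSpos : ∀ t : ℝ, 0 < ∑ i, ‖c i‖ ^ 2 * Real.exp (2 * lam i * t) := by
      intro t
      obtain ⟨i, hi⟩ : ∃ i, c i ≠ 0 := by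
        by_contra hcon
        push_neg at hcon
        apply hw
        rw [← hwsum]
        simp [hcon]
      refine Finset.sum_pos' (fun j _ => by positivity) ⟨i, Finset.mem_univ i, ?_⟩
      exact mul_pos (pow_pos (norm_pos_iff.mpr hi) 2) (Real.exp_pos _)
    have hSeq : ∀ t : ℝ, ∑ i, ‖c i‖ ^ 2 * Real.exp (2 * lam i * t) = Real.exp (α * t + β) := by
      intro t
      rw [← hf t, hnorm t, Real.exp_log (hSpos t)]
    have key : ∀ i, c i ≠ 0 → 2 * lam i = α := by
      intro i hi
      have hci : (0:ℝ) < ‖c i‖ ^ 2 := pow_pos (norm_pos_iff.mpr hi) 2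
      have hle2 : ∀ t : ℝ, (2 * lam i - α) * t ≤ β - Real.log (‖c i‖ ^ 2) := by
        intro t
        have hle : ‖c i‖ ^ 2 * Real.exp (2 * lam i * t) ≤ Real.exp (α * t + β) := by
          rw [← hSeq t]
          exact Finset.single_le_sum (f := fun j => ‖c j‖ ^ 2 * Real.exp (2 * lam j * t))
            (fun j _ => by positivity) (Finset.mem_univ i)
        have hlog := (Real.log_le_log_iff (by positivity) (Real.exp_pos _)).mpr hle
        rw [Real.log_mul (ne_of_gt hci) (Real.exp_ne_zero _), Real.log_exp, Real.log_exp] at hlog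
        linarith
      have := slope_zero hle2
      linarith
    refine ⟨((α / 2 : ℝ) : ℂ), ?_⟩
    conv_lhs => rw [← hwsum]
    conv_rhs => rw [← hwsum]
    rw [map_sum, Finset.smul_sum]
    refine Finset.sum_congr rfl fun i _ => ?_
    rw [map_smul, heig i, smul_smul, smul_smul]
    by_cases hci : c i = 0
    · simp [hci]
    · have h2 : lam i = α / 2 := by have := key i hci; linarith
      rw [h2, mul_comm]
  · rintro ⟨μ, hμ⟩
    refine ⟨2 * μ.re, Real.log (‖w‖ ^ 2), fun t => ?_⟩
    have h1 : (t • A) w = ((t : ℂ) * μ) • w := by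
      rw [ContinuousLinearMap.smul_apply, hμ, RCLike.real_smul_eq_coe_smul (K := ℂ), smul_smul]
      exact rfl
    rw [exp_apply_eig (t • A) w _ h1, norm_smul, mul_pow,
      Complex.norm_exp]
    have hre : ((t : ℂ) * μ).re = t * μ.re := by simp
    rw [hre, ← Real.exp_nat_mul]
    rw [Real.log_mul (Real.exp_ne_zero _) (pow_ne_zero 2 (norm_ne_zero_iff.mpr hw))]
    rw [Real.log_exp]
    ring
end

section
/- Let W be a nonzero finite-dimensional complex inner product space, A a self-adjoint linear endomorphism of W, and w ∈ W a vector with Re⟪A w, w⟫ = 0. Then ‖exp(tA) w‖ ≥ ‖w‖ for every real t. -/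
open scoped ComplexInnerProductSpace

lemma exp_apply_eigenvector {W : Type*} [NormedAddCommGroup W] [NormedSpace ℂ W]
    [CompleteSpace W] (B : W →L[ℂ] W) (x : W) (c : ℂ) (h : B x = c • x) :
    NormedSpace.exp B x = Complex.exp c • x := by
  have hpow : ∀ n : ℕ, (B ^ n) x = c ^ n • x := by
    intro n
    induction n with
    | zero => simp
    | succ n ih =>
      rw [pow_succ, pow_succ, ContinuousLinearMap.mul_apply, h, map_smul, ih, smul_smul,
        mul_comm]
  have hsum : Summable fun n : ℕ => ((n.factorial : ℂ))⁻¹ • B ^ n := NormedSpace.expSeries_summable' B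
  have hsum2 : Summable fun n : ℕ => ((n.factorial : ℂ))⁻¹ • c ^ n := NormedSpace.expSeries_summable' c
  calc NormedSpace.exp B x = (∑' n : ℕ, ((n.factorial : ℂ))⁻¹ • B ^ n) x := by
        rw [NormedSpace.exp_eq_tsum (𝕂 := ℂ)]
    _ = ∑' n : ℕ, (((n.factorial : ℂ))⁻¹ • B ^ n) x :=
        (ContinuousLinearMap.apply ℂ W x).map_tsum hsum
    _ = ∑' n : ℕ, (((n.factorial : ℂ))⁻¹ • c ^ n) • x := by
        congr 1; funext n
        simp [hpow n, smul_smul]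
    _ = (∑' n : ℕ, ((n.factorial : ℂ))⁻¹ • c ^ n) • x := hsum2.tsum_smul_const x
    _ = Complex.exp c • x := by
        rw [Complex.exp_eq_exp_ℂ, NormedSpace.exp_eq_tsum (𝕂 := ℂ)]

theorem stmt_3
    (W : Type*) [NormedAddCommGroup W] [InnerProductSpace ℂ W]
    [FiniteDimensional ℂ W] [Nontrivial W]
    (A : W →L[ℂ] W)
    (hA : ∀ x y : W, ⟪A x, y⟫ = ⟪x, A y⟫)
    (w : W) (hw : (⟪A w, w⟫).re = 0) :
    ∀ t : ℝ, ‖(NormedSpace.exp (t • A)) w‖ ≥ ‖w‖ := by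
  intro t
  classical
  have hsym : (A : W →ₗ[ℂ] W).IsSymmetric := fun x y => hA x y
  have hrank : Module.finrank ℂ W = Module.finrank ℂ W := rfl
  set b := hsym.eigenvectorBasis hrank with hbdef
  set μ := hsym.eigenvalues hrank with hμdef
  have heig : ∀ i, A (b i) = (μ i : ℂ) • b i := fun i => hsym.apply_eigenvectorBasis hrank i
  set c : Fin (Module.finrank ℂ W) → ℂ := fun i => b.repr w i with hcdef
  -- exp(tA) on eigenvectors
  have hexpb : ∀ j, NormedSpace.exp (t • A) (b j) = Complex.exp (↑(t * μ j)) • b j := by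
    intro j
    apply exp_apply_eigenvector
    rw [ContinuousLinearMap.smul_apply, heig j]
    push_cast
    rw [mul_smul]
    exact (Complex.coe_smul t _).symm
  -- coordinates of exp(tA) w
  have hrepr : ∀ i, b.repr (NormedSpace.exp (t • A) w) i = Complex.exp (↑(t * μ i)) * c i := by
    intro i
    have hw' : NormedSpace.exp (t • A) w
        = ∑ j, (c j * Complex.exp (↑(t * μ j))) • b j := by
      conv_lhs => rw [← b.sum_repr w]
      rw [map_sum]
      congr 1; funext j
      rw [map_smul, hexpb j, smul_smul]
    rw [hw', map_sum]
    simp only [map_smul, b.repr_self]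
    rw [WithLp.ofLp_sum, Finset.sum_apply]
    simp only [WithLp.ofLp_smul, Pi.smul_apply, PiLp.smul_apply, EuclideanSpace.single_apply, smul_eq_mul, mul_ite, mul_one,
      mul_zero]
    rw [Finset.sum_ite_eq Finset.univ i, if_pos (Finset.mem_univ i), mul_comm]
  -- norm squared in coordinates
  have hnorm_sq : ∀ x : W, ‖x‖ ^ 2 = ∑ i, ‖b.repr x i‖ ^ 2 := by
    intro x
    rw [← b.repr.norm_map x, EuclideanSpace.norm_eq, Real.sq_sqrt]
    exact Finset.sum_nonneg fun i _ => sq_nonneg _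
  have hAw : ∀ i, b.repr (A w) i = (μ i : ℂ) * c i := fun i =>
    hsym.eigenvectorBasis_apply_self_apply hrank w i
  -- the momentum condition
  have hmom : ∑ i, μ i * ‖c i‖ ^ 2 = 0 := by
    have h1 : ⟪A w, w⟫ = ∑ i, (starRingEnd ℂ) (b.repr (A w) i) * b.repr w i := by
      rw [← b.repr.inner_map_map (A w) w, PiLp.inner_apply]
      simp only [RCLike.inner_apply]
      exact Finset.sum_congr rfl fun i _ => mul_comm _ _
    rw [h1] at hw
    simp only [hAw] at hw
    rw [← hw, Complex.re_sum]
    congr 1; funext i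
    have h2 : (starRingEnd ℂ) ((μ i : ℂ) * c i) * c i = ((μ i * ‖c i‖ ^ 2 : ℝ) : ℂ) := by
      rw [map_mul, Complex.conj_ofReal, mul_assoc, mul_comm ((starRingEnd ℂ) (c i)),
        Complex.mul_conj, Complex.normSq_eq_norm_sq]
      push_cast
      ring
    rw [h2, Complex.ofReal_re]
  -- inequality on squares
  have hsq : ‖w‖ ^ 2 ≤ ‖NormedSpace.exp (t • A) w‖ ^ 2 := by
    rw [hnorm_sq w, hnorm_sq (NormedSpace.exp (t • A) w)]
    have key : ∀ i : Fin (Module.finrank ℂ W),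
        ‖b.repr (NormedSpace.exp (t • A) w) i‖ ^ 2
          = Real.exp (2 * (t * μ i)) * ‖c i‖ ^ 2 := by
      intro i
      rw [hrepr i, norm_mul, mul_pow, Complex.norm_exp, Complex.ofReal_re,
        ← Real.exp_nat_mul]
      norm_num [mul_comm]
    calc ∑ i, ‖b.repr w i‖ ^ 2
        = ∑ i, (1 + 2 * (t * μ i)) * ‖c i‖ ^ 2 := by
          simp only [add_mul, one_mul, Finset.sum_add_distrib]
          have : ∑ i, 2 * (t * μ i) * ‖c i‖ ^ 2 = 2 * t * ∑ i, μ i * ‖c i‖ ^ 2 := by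
            rw [Finset.mul_sum]
            congr 1; funext i; ring
          rw [this, hmom]
          simp [hcdef]
      _ ≤ ∑ i, Real.exp (2 * (t * μ i)) * ‖c i‖ ^ 2 := by
          apply Finset.sum_le_sum
          intro i _
          have := Real.add_one_le_exp (2 * (t * μ i))
          nlinarith [sq_nonneg ‖c i‖]
      _ = ∑ i, ‖b.repr (NormedSpace.exp (t • A) w) i‖ ^ 2 := by
          simp only [key]
  have := Real.sqrt_le_sqrt hsq
  rwa [Real.sqrt_sq (norm_nonneg _), Real.sqrt_sq (norm_nonneg _)] at this
end
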